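/- Relative 3×3 lemma: Let (C, E) be a relative homological category. Consider a commutative 3×3 diagram whose three columns (0 → A → A' → A'' → 0, etc.) and middle row (0 → A' → B' → C' → 0) are E-exact short exact sequences. Then the top row 0 → A → B → C → 0 is E-exact if and only if the bottom row 0 → A'' → B'' → C'' → 0 is E-exact. -/

import Mathlib

open CategoryTheory CategoryTheory.Limits ZeroObject

universe v u v' u'

namespace RelHom

variable {C : Type u} [Category.{v} C]

/-- `E` is stable under pullback. -/
def PullbackStable (E : MorphismProperty C) : Prop :=
  ∀ ⦃P X Y Z : C⦄ (fst : P ⟶ X) (snd : P ⟶ Y) (f : X ⟶ Z) (g : Y ⟶ Z),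
    IsPullback fst snd f g → E g → E fst

/-- `E` contains all isomorphisms. -/
def ContainsIsos (E : MorphismProperty C) : Prop :=
  ∀ ⦃X Y : C⦄ (f : X ⟶ Y), IsIso f → E f

/-- `E` is closed under composition. -/
def CompClosed (E : MorphismProperty C) : Prop :=
  ∀ ⦃X Y Z : C⦄ (f : X ⟶ Y) (g : Y ⟶ Z), E f → E g → E (f ≫ g)

/-- If `f ∈ E` and `f ≫ g ∈ E` then `g ∈ E`. -/
def RightCancel (E : MorphismProperty C) : Prop :=
  ∀ ⦃X Y Z : C⦄ (f : X ⟶ Y) (g : Y ⟶ Z), E f → E (f ≫ g) → E g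

variable [HasZeroMorphisms C]

/-- The `E`-short five lemma. -/
def ShortFive (E : MorphismProperty C) : Prop :=
  ∀ ⦃K A A' B : C⦄ (k : K ⟶ A) (k' : K ⟶ A') (f : A ⟶ B) (f' : A' ⟶ B) (w : A ⟶ A')
    (hk : k ≫ f = 0) (hk' : k' ≫ f' = 0),
    IsLimit (KernelFork.ofι k hk) → IsLimit (KernelFork.ofι k' hk') →
    E f → E f' → w ≫ f' = f → k ≫ w = k' → IsIso w

/-- Every morphism in `E` is a normal epimorphism. -/
def AllNormalEpi (E : MorphismProperty C) : Prop :=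
  ∀ ⦃X Y : C⦄ (f : X ⟶ Y), E f → Nonempty (NormalEpi f)

/-- Condition (f): (mono)∘(E) composites admit (E, mono)-factorizations. -/
def MonoFactor (E : MorphismProperty C) : Prop :=
  ∀ ⦃X Y Z : C⦄ (e : X ⟶ Y) (m : Y ⟶ Z), E e → Mono m →
    ∃ (W : C) (e' : X ⟶ W) (m' : W ⟶ Z), E e' ∧ Mono m' ∧ e' ≫ m' = e ≫ m

/-- Condition (g): the kernel-ladder condition. -/
def KernelLadder (E : MorphismProperty C) : Prop :=
  ∀ ⦃K K' A A' B : C⦄ (k : K ⟶ A) (k' : K' ⟶ A') (f : A ⟶ B) (f' : A' ⟶ B)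
    (u : K ⟶ K') (w : A ⟶ A') (hk : k ≫ f = 0) (hk' : k' ≫ f' = 0),
    IsLimit (KernelFork.ofι k hk) → IsLimit (KernelFork.ofι k' hk') →
    E f → E f' → E u → w ≫ f' = f → k ≫ w = u ≫ k' → E w

/-- `(C, E)` is a relative weakly homological category: conditions (a)–(e). -/
structure WeaklyHomological (E : MorphismProperty C) : Prop where
  contains_isos : ContainsIsos E
  stable : PullbackStable E
  normal_epi : AllNormalEpi E
  short_five : ShortFive E
  comp_closed : CompClosed E
  right_cancel : RightCancel E

/-- `(C, E)` is a relative homological category: conditions (a)–(g). -/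
structure Homological (E : MorphismProperty C) extends WeaklyHomological E : Prop where
  mono_factor : MonoFactor E
  ladder : KernelLadder E

/-- A composable pair is `E`-exact at the middle object if the incoming morphism
factors as a morphism in `E` followed by the kernel of the outgoing morphism. -/
def EExactAt (E : MorphismProperty C) ⦃X Y Z : C⦄ (f : X ⟶ Y) (g : Y ⟶ Z) : Prop :=
  ∃ (W : C) (e : X ⟶ W) (m : W ⟶ Y) (hm : m ≫ g = 0),
    E e ∧ Nonempty (IsLimit (KernelFork.ofι m hm)) ∧ e ≫ m = f

/-- `0 ⟶ X ⟶ Y ⟶ Z ⟶ 0` is an `E`-exact (short exact) sequence: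
`f` is the kernel of `g` and `g ∈ E`. -/
def ShortEExact (E : MorphismProperty C) ⦃X Y Z : C⦄ (f : X ⟶ Y) (g : Y ⟶ Z)
    (h : f ≫ g = 0) : Prop :=
  Nonempty (IsLimit (KernelFork.ofι f h)) ∧ E g

/-- The class of split epimorphisms. -/
def SplitEpis : MorphismProperty C := fun _ _ f => IsSplitEpi f

/-- The class of regular epimorphisms. -/
def RegEpis : MorphismProperty C := fun _ _ f => Nonempty (RegularEpi f)

section Helpers

set_option linter.unusedSectionVars false

variable [HasZeroObject C] [HasFiniteLimits C]

lemma mono_of_kernelFork {X Y K : C} {f : X ⟶ Y} {k : K ⟶ X} {w : k ≫ f = 0}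
    (h : IsLimit (KernelFork.ofι k w)) : Mono k :=
  ⟨fun _ _ huv => Fork.IsLimit.hom_ext h (by simpa using huv)⟩

lemma epiOfE {X Y : C} {f : X ⟶ Y} (h : Nonempty (NormalEpi f)) : Epi f := by
  obtain ⟨ne⟩ := h
  haveI := ne
  infer_instance

lemma isoOfE (E : MorphismProperty C) (hE : Homological E) {X Y : C} (f : X ⟶ Y) (hf : E f)
    (h0 : ∀ {T : C} (s : T ⟶ X), s ≫ f = 0 → s = 0) : IsIso f := by
  obtain ⟨ne⟩ := hE.normal_epi f hf
  haveI : Epi f := epiOfE ⟨ne⟩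
  have hg : ne.g = 0 := h0 _ ne.w
  obtain ⟨s, hs⟩ := CokernelCofork.IsColimit.desc' ne.isColimit (𝟙 X)
    (by rw [hg, zero_comp])
  simp only [Cofork.π_ofπ] at hs
  exact ⟨s, hs, by rw [← cancel_epi f, ← Category.assoc, hs, Category.id_comp, Category.comp_id]⟩

lemma EKerToZero (E : MorphismProperty C) (hE : Homological E) {K X Y : C} (f : X ⟶ Y)
    (k : K ⟶ X) (hk : k ≫ f = 0) (limk : IsLimit (KernelFork.ofι k hk)) (hf : E f) :
    E (0 : K ⟶ (0 : C)) := by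
  haveI : Mono k := mono_of_kernelFork limk
  have comm : (0 : K ⟶ (0 : C)) ≫ (0 : (0 : C) ⟶ Y) = k ≫ f := by rw [zero_comp, hk]
  have hsnd : ∀ s : PullbackCone (0 : (0 : C) ⟶ Y) f, s.snd ≫ f = 0 := fun s => by
    rw [← s.condition, comp_zero]
  have hlift : ∀ s : PullbackCone (0 : (0 : C) ⟶ Y) f,
      (KernelFork.IsLimit.lift' limk s.snd (hsnd s)).1 ≫ k = s.snd := fun s => by
    simpa using (KernelFork.IsLimit.lift' limk s.snd (hsnd s)).2
  have ispb : IsPullback (0 : K ⟶ (0 : C)) k (0 : (0 : C) ⟶ Y) f := by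
    apply IsPullback.of_isLimit (c := PullbackCone.mk _ _ comm)
    refine PullbackCone.IsLimit.mk comm
      (fun s => (KernelFork.IsLimit.lift' limk s.snd (hsnd s)).1)
      (fun s => (isZero_zero C).eq_of_tgt _ _)
      (fun s => hlift s)
      (fun s m h1 h2 => by rw [← cancel_mono k, h2, hlift s])
  exact hE.stable _ _ _ _ ispb hf

lemma EProdFst (E : MorphismProperty C) (hE : Homological E) (Y W : C)
    (hW : E (0 : W ⟶ (0 : C))) : E (prod.fst : Y ⨯ W ⟶ Y) := by
  have comm : (prod.fst : Y ⨯ W ⟶ Y) ≫ (0 : Y ⟶ (0 : C)) = prod.snd ≫ (0 : W ⟶ (0 : C)) := by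
    rw [comp_zero, comp_zero]
  have ispb : IsPullback (prod.fst : Y ⨯ W ⟶ Y) prod.snd (0 : Y ⟶ (0 : C)) (0 : W ⟶ (0 : C)) := by
    apply IsPullback.of_isLimit (c := PullbackCone.mk _ _ comm)
    exact PullbackCone.IsLimit.mk comm (fun s => prod.lift s.fst s.snd)
      (fun s => prod.lift_fst _ _) (fun s => prod.lift_snd _ _)
      (fun s m h1 h2 => Limits.prod.hom_ext (by rw [h1, prod.lift_fst])
        (by rw [h2, prod.lift_snd]))
  exact hE.stable _ _ _ _ ispb hW

noncomputable def limProdSnd (Y W : C) :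
    IsLimit (KernelFork.ofι (prod.lift (0 : W ⟶ Y) (𝟙 W)) (by simp [prod.lift_fst, prod.lift_snd]) :
      KernelFork (prod.fst : Y ⨯ W ⟶ Y)) := by
  haveI : Mono (prod.lift (0 : W ⟶ Y) (𝟙 W)) := by
    have h2 : Mono (prod.lift (0 : W ⟶ Y) (𝟙 W) ≫ prod.snd) := by
      rw [prod.lift_snd]; infer_instance
    exact mono_of_mono _ (prod.snd)
  refine KernelFork.IsLimit.ofι' _ _ (fun {T} k hk => ⟨k ≫ prod.snd, ?_⟩)
  apply Limits.prod.hom_ext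
  · simp [hk, prod.lift_fst, prod.lift_snd]
  · simp [prod.lift_fst, prod.lift_snd]

lemma starE (E : MorphismProperty C) (hE : Homological E) {P Y W Kp Kq : C}
    (p : P ⟶ Y) (q : P ⟶ W) (kp : Kp ⟶ P) (kq : Kq ⟶ P)
    (hkp : kp ≫ p = 0) (hkq : kq ≫ q = 0)
    (limp : IsLimit (KernelFork.ofι kp hkp)) (limq : IsLimit (KernelFork.ofι kq hkq))
    (hp : E p) (hu : E (kp ≫ q)) (hW : E (0 : W ⟶ (0 : C))) : E (kq ≫ p) := by
  haveI : Mono kq := mono_of_kernelFork limq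
  have hS : E (prod.lift p q) := by
    refine hE.ladder kp (prod.lift (0 : W ⟶ Y) (𝟙 W)) p (prod.fst) (kp ≫ q) (prod.lift p q)
      hkp (by simp [prod.lift_fst, prod.lift_snd]) limp (limProdSnd Y W) hp (EProdFst E hE Y W hW) hu (prod.lift_fst _ _) ?_
    apply Limits.prod.hom_ext
    · simp [hkp]
    · simp [prod.lift_fst, prod.lift_snd]
  have comm : (kq ≫ p) ≫ prod.lift (𝟙 Y) (0 : Y ⟶ W) = kq ≫ prod.lift p q := by
    apply Limits.prod.hom_ext
    · simp [prod.lift_fst, prod.lift_snd]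
    · simp [hkq]
  have e2 : ∀ s : PullbackCone (prod.lift (𝟙 Y) (0 : Y ⟶ W)) (prod.lift p q),
      s.snd ≫ q = 0 := fun s => by
    have h := congrArg (fun t => t ≫ (prod.snd : Y ⨯ W ⟶ W)) s.condition
    simpa [prod.lift_fst, prod.lift_snd] using h.symm
  have e1 : ∀ s : PullbackCone (prod.lift (𝟙 Y) (0 : Y ⟶ W)) (prod.lift p q),
      s.fst = s.snd ≫ p := fun s => by
    have h := congrArg (fun t => t ≫ (prod.fst : Y ⨯ W ⟶ Y)) s.condition
    simpa [prod.lift_fst, prod.lift_snd] using h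
  have hlift : ∀ s : PullbackCone (prod.lift (𝟙 Y) (0 : Y ⟶ W)) (prod.lift p q),
      (KernelFork.IsLimit.lift' limq s.snd (e2 s)).1 ≫ kq = s.snd := fun s => by
    simpa using (KernelFork.IsLimit.lift' limq s.snd (e2 s)).2
  have ispb : IsPullback (kq ≫ p) kq (prod.lift (𝟙 Y) (0 : Y ⟶ W)) (prod.lift p q) := by
    apply IsPullback.of_isLimit (c := PullbackCone.mk _ _ comm)
    refine PullbackCone.IsLimit.mk comm
      (fun s => (KernelFork.IsLimit.lift' limq s.snd (e2 s)).1)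
      (fun s => by rw [← Category.assoc, hlift s]; exact (e1 s).symm)
      (fun s => hlift s)
      (fun s m h1 h2 => by rw [← cancel_mono kq, h2, hlift s])
  exact hE.stable _ _ _ _ ispb hS

end Helpers

theorem statement13 [HasZeroObject C] [HasFiniteLimits C] [HasCokernels C]
    (E : MorphismProperty C) (hE : Homological E)
    {A B Z A' B' Z' A'' B'' Z'' : C}
    (f : A ⟶ B) (g : B ⟶ Z) (f' : A' ⟶ B') (g' : B' ⟶ Z')
    (f'' : A'' ⟶ B'') (g'' : B'' ⟶ Z'')
    (a : A ⟶ A') (a' : A' ⟶ A'') (b : B ⟶ B') (b' : B' ⟶ B'')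
    (c : Z ⟶ Z') (c' : Z' ⟶ Z'')
    (sq1 : f ≫ b = a ≫ f') (sq2 : g ≫ c = b ≫ g')
    (sq3 : f' ≫ b' = a' ≫ f'') (sq4 : g' ≫ c' = b' ≫ g'')
    (ha0 : a ≫ a' = 0) (hb0 : b ≫ b' = 0) (hc0 : c ≫ c' = 0)
    (hcolA : ShortEExact E a a' ha0) (hcolB : ShortEExact E b b' hb0)
    (hcolC : ShortEExact E c c' hc0)
    (hmid0 : f' ≫ g' = 0) (hmid : ShortEExact E f' g' hmid0)
    (htop0 : f ≫ g = 0) (hbot0 : f'' ≫ g'' = 0) :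
    ShortEExact E f g htop0 ↔ ShortEExact E f'' g'' hbot0 := by
  obtain ⟨⟨lima⟩, ha'E⟩ := hcolA
  obtain ⟨⟨limb⟩, hb'E⟩ := hcolB
  obtain ⟨⟨limc⟩, hc'E⟩ := hcolC
  obtain ⟨⟨limf'⟩, hg'E⟩ := hmid
  haveI monoa : Mono a := mono_of_kernelFork lima
  haveI monob : Mono b := mono_of_kernelFork limb
  haveI monoc : Mono c := mono_of_kernelFork limc
  haveI monof' : Mono f' := mono_of_kernelFork limf'
  -- the pullback P of the middle row along c
  have hπZE : E (pullback.fst c g') :=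
    hE.stable _ _ c g' (IsPullback.of_hasPullback c g') hg'E
  -- j : A' ⟶ P, the kernel of pullback.fst
  obtain ⟨j, hjZ, hjB⟩ : ∃ j : A' ⟶ pullback c g',
      j ≫ pullback.fst c g' = 0 ∧ j ≫ pullback.snd c g' = f' :=
    ⟨pullback.lift 0 f' (by rw [zero_comp, hmid0]), pullback.lift_fst _ _ _,
      pullback.lift_snd _ _ _⟩
  haveI monoj : Mono j := by
    haveI : Mono (j ≫ pullback.snd c g') := by rw [hjB]; infer_instance
    exact mono_of_mono _ (pullback.snd c g')
  have limj : IsLimit (KernelFork.ofι j hjZ) := by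
    refine KernelFork.IsLimit.ofι' _ _ (fun {T} k hk => ?_)
    have h2 : (k ≫ pullback.snd c g') ≫ g' = 0 := by
      rw [Category.assoc, ← pullback.condition, ← Category.assoc, hk, zero_comp]
    obtain ⟨l, hl⟩ := KernelFork.IsLimit.lift' limf' (k ≫ pullback.snd c g') h2
    simp only [Fork.ι_ofι] at hl
    refine ⟨l, ?_⟩
    apply pullback.hom_ext
    · rw [Category.assoc, hjZ, comp_zero, hk]
    · rw [Category.assoc, hjB, hl]
  -- h : B ⟶ P
  obtain ⟨hm, hhZ, hhB⟩ : ∃ hm : B ⟶ pullback c g',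
      hm ≫ pullback.fst c g' = g ∧ hm ≫ pullback.snd c g' = b :=
    ⟨pullback.lift g b sq2, pullback.lift_fst _ _ _, pullback.lift_snd _ _ _⟩
  haveI monohm : Mono hm := by
    haveI : Mono (hm ≫ pullback.snd c g') := by rw [hhB]; infer_instance
    exact mono_of_mono _ (pullback.snd c g')
  -- zero-to-zero morphisms in E
  have hEA'0 : E (0 : A' ⟶ (0 : C)) := EKerToZero E hE g' f' hmid0 limf' hg'E
  have hEA''0 : E (0 : A'' ⟶ (0 : C)) := by
    refine hE.right_cancel a' (0 : A'' ⟶ (0 : C)) ha'E ?_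
    rw [comp_zero]
    exact hEA'0
  have hEZ0 : E (0 : Z ⟶ (0 : C)) := EKerToZero E hE c' c hc0 limc hc'E
  -- the common vanishing used to map P into kernels of g''
  have hPg'' : (pullback.snd c g' ≫ b') ≫ g'' = 0 := by
    rw [Category.assoc, ← sq4, ← Category.assoc, ← pullback.condition,
      Category.assoc, hc0, comp_zero]
  constructor
  · -- top E-exact → bottom E-exact
    rintro ⟨⟨limtop⟩, hgE⟩
    have hg''E : E g'' := by
      refine hE.right_cancel b' g'' hb'E ?_
      rw [← sq4]
      exact hE.comp_closed g' c' hg'E hc'E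
    -- θK : P ⟶ kernel g''
    obtain ⟨θK, hθK⟩ : ∃ θK : pullback c g' ⟶ kernel g'',
        θK ≫ kernel.ι g'' = pullback.snd c g' ≫ b' :=
      ⟨kernel.lift g'' _ hPg'', kernel.lift_ι _ _ _⟩
    -- θK is in E: it is a pullback of b'
    have commθ : θK ≫ kernel.ι g'' = pullback.snd c g' ≫ b' := hθK
    have hcondz : ∀ s : PullbackCone (kernel.ι g'') b', (s.snd ≫ g') ≫ c' = 0 := by
      intro s
      rw [Category.assoc, sq4, ← Category.assoc, ← s.condition, Category.assoc,
        kernel.condition, comp_zero]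
    have hEθK : E θK := by
      have ispb : IsPullback θK (pullback.snd c g') (kernel.ι g'') b' := by
        apply IsPullback.of_isLimit (c := PullbackCone.mk _ _ commθ)
        have hz : ∀ s : PullbackCone (kernel.ι g'') b',
            (KernelFork.IsLimit.lift' limc (s.snd ≫ g') (hcondz s)).1 ≫ c = s.snd ≫ g' :=
          fun s => by simpa using (KernelFork.IsLimit.lift' limc (s.snd ≫ g') (hcondz s)).2
        refine PullbackCone.IsLimit.mk commθ
          (fun s => pullback.lift _ s.snd (hz s))
          (fun s => ?_) (fun s => pullback.lift_snd _ _ _) (fun s m h1 h2 => ?_)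
        · rw [← cancel_mono (kernel.ι g''), Category.assoc, hθK, ← Category.assoc,
            pullback.lift_snd, s.condition]
        · apply pullback.hom_ext
          · beta_reduce
            rw [pullback.lift_fst, ← cancel_mono c, hz s, Category.assoc,
              pullback.condition, reassoc_of% h2]
          · beta_reduce
            rw [pullback.lift_snd, h2]
      exact hE.stable _ _ _ _ ispb hb'E
    -- h is the kernel of θK
    have hhθK : hm ≫ θK = 0 := by
      rw [← cancel_mono (kernel.ι g''), Category.assoc, hθK, ← Category.assoc, hhB,
        hb0, zero_comp]
    have limhθK : IsLimit (KernelFork.ofι hm hhθK) := by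
      refine KernelFork.IsLimit.ofι' _ _ (fun {T} t ht => ?_)
      have h1 : (t ≫ pullback.snd c g') ≫ b' = 0 := by
        rw [Category.assoc, ← hθK, ← Category.assoc, ht, zero_comp]
      obtain ⟨s, hs⟩ := KernelFork.IsLimit.lift' limb (t ≫ pullback.snd c g') h1
      simp only [Fork.ι_ofι] at hs
      refine ⟨s, ?_⟩
      apply pullback.hom_ext
      · rw [← cancel_mono c]
        simp only [Category.assoc]
        rw [reassoc_of% hhZ, sq2, reassoc_of% hs, ← pullback.condition]
      · rw [Category.assoc, hhB, hs]
    -- the key lemma gives E (j ≫ θK)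
    have hψ : E (j ≫ θK) := by
      refine starE E hE θK (pullback.fst c g') hm j hhθK hjZ limhθK limj hEθK ?_ hEZ0
      have : hm ≫ pullback.fst c g' = g := hhZ
      rw [this]
      exact hgE
    -- φ : A'' ⟶ kernel g''
    obtain ⟨φ, hφ⟩ : ∃ φ : A'' ⟶ kernel g'', φ ≫ kernel.ι g'' = f'' :=
      ⟨kernel.lift g'' f'' hbot0, kernel.lift_ι _ _ _⟩
    have haφ : a' ≫ φ = j ≫ θK := by
      rw [← cancel_mono (kernel.ι g''), Category.assoc, Category.assoc, hφ, hθK, ← sq3,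
        ← Category.assoc, hjB]
    have hEφ : E φ := by
      refine hE.right_cancel a' φ ha'E ?_
      rw [haφ]
      exact hψ
    -- φ has zero kernel
    have hker : ∀ {T : C} (s : T ⟶ A''), s ≫ φ = 0 → s = 0 := by
      intro T s hs
      have hsf : s ≫ f'' = 0 := by rw [← hφ, ← Category.assoc, hs, zero_comp]
      have hp1E : E (pullback.fst s a') :=
        hE.stable _ _ s a' (IsPullback.of_hasPullback s a') ha'E
      haveI : Epi (pullback.fst s a') := epiOfE (hE.normal_epi _ hp1E)
      have h1 : (pullback.snd s a' ≫ f') ≫ b' = 0 := by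
        rw [Category.assoc, sq3, ← Category.assoc, ← pullback.condition, Category.assoc,
          hsf, comp_zero]
      obtain ⟨u, hu⟩ := KernelFork.IsLimit.lift' limb (pullback.snd s a' ≫ f') h1
      simp only [Fork.ι_ofι] at hu
      have h2 : u ≫ g = 0 := by
        rw [← cancel_mono c, Category.assoc, sq2, ← Category.assoc, hu, Category.assoc,
          hmid0, comp_zero, zero_comp]
      obtain ⟨v, hv⟩ := KernelFork.IsLimit.lift' limtop u h2
      simp only [Fork.ι_ofι] at hv
      have h3 : v ≫ a = pullback.snd s a' := by
        rw [← cancel_mono f', Category.assoc, ← sq1, ← Category.assoc, hv, hu]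
      have h4 : pullback.fst s a' ≫ s = 0 := by
        rw [pullback.condition, ← h3, Category.assoc, ha0, comp_zero]
      rw [← cancel_epi (pullback.fst s a'), h4, comp_zero]
    haveI hφiso : IsIso φ := isoOfE E hE φ hEφ hker
    haveI monof'' : Mono f'' := by
      haveI : Mono (φ ≫ kernel.ι g'') := mono_comp _ _
      rw [← hφ]; infer_instance
    have limbot : IsLimit (KernelFork.ofι f'' hbot0) := by
      refine KernelFork.IsLimit.ofι' _ _ (fun {T} t ht => ?_)
      refine ⟨kernel.lift g'' t ht ≫ inv φ, ?_⟩
      rw [← hφ, Category.assoc, IsIso.inv_hom_id_assoc, kernel.lift_ι]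
    exact ⟨⟨limbot⟩, hg''E⟩
  · -- bottom E-exact → top E-exact
    rintro ⟨⟨limbot⟩, hg''E⟩
    haveI monof'' : Mono f'' := mono_of_kernelFork limbot
    -- θ : P ⟶ A''
    obtain ⟨θ, hθ⟩ : ∃ θ : pullback c g' ⟶ A'', θ ≫ f'' = pullback.snd c g' ≫ b' := by
      obtain ⟨l, hl⟩ := KernelFork.IsLimit.lift' limbot _ hPg''
      exact ⟨l, by simpa using hl⟩
    have hjθ : j ≫ θ = a' := by
      rw [← cancel_mono f'', Category.assoc, hθ, ← Category.assoc, hjB, sq3]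
    have hhθ : hm ≫ θ = 0 := by
      rw [← cancel_mono f'', Category.assoc, hθ, ← Category.assoc, hhB, hb0, zero_comp]
    have limhθ : IsLimit (KernelFork.ofι hm hhθ) := by
      refine KernelFork.IsLimit.ofι' _ _ (fun {T} t ht => ?_)
      have h1 : (t ≫ pullback.snd c g') ≫ b' = 0 := by
        rw [Category.assoc, ← hθ, ← Category.assoc, ht, zero_comp]
      obtain ⟨s, hs⟩ := KernelFork.IsLimit.lift' limb (t ≫ pullback.snd c g') h1
      simp only [Fork.ι_ofι] at hs
      refine ⟨s, ?_⟩
      apply pullback.hom_ext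
      · rw [← cancel_mono c]
        simp only [Category.assoc]
        rw [reassoc_of% hhZ, sq2, reassoc_of% hs, ← pullback.condition]
      · rw [Category.assoc, hhB, hs]
    -- the key lemma gives E (hm ≫ pullback.fst) = E g
    have hgE : E g := by
      have h := starE E hE (pullback.fst c g') θ j hm hjZ hhθ limj limhθ hπZE
        (by rw [hjθ]; exact ha'E) hEA''0
      rwa [hhZ] at h
    -- f is the kernel of g
    haveI monof : Mono f := by
      haveI : Mono (f ≫ b) := by rw [sq1]; exact mono_comp _ _
      exact mono_of_mono _ b
    have limtop : IsLimit (KernelFork.ofι f htop0) := by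
      refine KernelFork.IsLimit.ofι' _ _ (fun {T} t ht => ?_)
      have h1 : (t ≫ b) ≫ g' = 0 := by
        rw [Category.assoc, ← sq2, ← Category.assoc, ht, zero_comp]
      obtain ⟨s, hs⟩ := KernelFork.IsLimit.lift' limf' (t ≫ b) h1
      simp only [Fork.ι_ofι] at hs
      have h2 : s ≫ a' = 0 := by
        rw [← cancel_mono f'', Category.assoc, ← sq3, ← Category.assoc, hs, Category.assoc,
          hb0, comp_zero, zero_comp]
      obtain ⟨r, hr⟩ := KernelFork.IsLimit.lift' lima s h2
      simp only [Fork.ι_ofι] at hr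
      refine ⟨r, ?_⟩
      rw [← cancel_mono b, Category.assoc, sq1, ← Category.assoc, hr, hs]
    exact ⟨⟨limtop⟩, hgE⟩

end RelHom
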